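/- Let u>0, s≥0 and ν₀,ν₁≥0 with ν₀+ν₁=1, and assume u>s or ν₀>0. Define p = (1/2)((u+s)/(uν₁) − √(((u+s)/(uν₁))² − 4s/(uν₁))) if ν₁>0, and p = s/(u+s) if ν₁=0. Suppose (a_n)_{n≥0} is a real sequence with a₀ = 1, a_n → 0 as n → ∞, and (u+s) a_n = s a_{n−1} + u ν₁ a_{n+1} for all n ≥ 1. Then a_n = pⁿ for all n ≥ 0. -/

import Mathlib

open Filter

set_option maxHeartbeats 1600000 in
/-- Fearnhead's recursion in the deterministic limit: in the positive recurrent regime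
(`u > s` or `ν₀ > 0`), the unique solution of `(u+s) a_n = s a_{n-1} + u ν₁ a_{n+1}` with
`a₀ = 1` and `a_n → 0` is `a_n = pⁿ`, with `p` the geometric parameter. -/
theorem fearnhead_recursion_solution
    (u s ν₀ ν₁ p : ℝ) (hu : 0 < u) (hs : 0 ≤ s)
    (hν₀ : 0 ≤ ν₀) (hν₁ : 0 ≤ ν₁) (hν : ν₀ + ν₁ = 1)
    (hrec : s < u ∨ 0 < ν₀)
    (hp1 : 0 < ν₁ →
      p = ((u + s) / (u * ν₁)
            - Real.sqrt (((u + s) / (u * ν₁)) ^ 2 - 4 * s / (u * ν₁))) / 2)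
    (hp2 : ν₁ = 0 → p = s / (u + s))
    (a : ℕ → ℝ) (ha0 : a 0 = 1) (hlim : Tendsto a atTop (nhds 0))
    (harec : ∀ n : ℕ, 1 ≤ n → (u + s) * a n = s * a (n - 1) + u * ν₁ * a (n + 1)) :
    ∀ n : ℕ, a n = p ^ n := by
  have hus : 0 < u + s := by linarith
  rcases eq_or_lt_of_le hν₁ with h0 | h1
  · -- case ν₁ = 0
    have hν₁0 : ν₁ = 0 := h0.symm
    have hp : p = s / (u + s) := hp2 hν₁0
    intro n
    induction n with
    | zero => simpa using ha0
    | succ n ih =>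
      have h := harec (n + 1) (by omega)
      have h2 : (u + s) * a (n + 1) = s * a n := by
        simpa [hν₁0] using h
      have h3 : a (n + 1) = s / (u + s) * a n := by
        field_simp
        linarith
      rw [h3, ih, hp]; ring
  · -- case ν₁ > 0
    have hpval := hp1 h1
    have hm0 : 0 < u * ν₁ := mul_pos hu h1
    set m := u * ν₁ with hm
    clear_value m
    have hmne : m ≠ 0 := hm0.ne'
    set S := (u + s) / m with hSdef
    clear_value S
    set P := s / m with hPdef
    clear_value P
    have hS0 : 0 < S := by rw [hSdef]; exact div_pos hus hm0
    have hP0 : 0 ≤ P := by rw [hPdef]; exact div_nonneg hs hm0.le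
    set D := S ^ 2 - 4 * s / m with hDdef
    clear_value D
    have hD4 : D = S ^ 2 - 4 * P := by rw [hDdef, hPdef]; ring
    have hDpos : 0 < D := by
      have h2 : D * m ^ 2 = (u - s) ^ 2 + 4 * s * u * ν₀ := by
        have hν₀' : ν₀ = 1 - ν₁ := by linarith
        rw [hDdef, hSdef, hν₀', hm]
        field_simp
        ring
      have h3 : 0 < (u - s) ^ 2 + 4 * s * u * ν₀ := by
        have hnn : 0 ≤ 4 * s * u * ν₀ := by positivity
        rcases hrec with h | h
        · have : 0 < (u - s) ^ 2 := pow_pos (by linarith) 2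
          linarith
        · rcases eq_or_lt_of_le hs with hs0 | hs0
          · rw [← hs0]
            nlinarith [pow_pos hu 2]
          · have : 0 < 4 * s * u * ν₀ := by positivity
            nlinarith [sq_nonneg (u - s)]
      nlinarith [pow_pos hm0 2]
    set r := Real.sqrt D with hrdef
    clear_value r
    have hrpos : 0 < r := by rw [hrdef]; exact Real.sqrt_pos.mpr hDpos
    have hr2 : r ^ 2 = D := by rw [hrdef]; exact Real.sq_sqrt hDpos.le
    set q := S - p with hqeq
    clear_value q
    have hq' : q = (S + r) / 2 := by rw [hqeq, hpval]; ring
    have hpq_prod : p * q = P := by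
      rw [hpval, hq']
      linear_combination (-1/4 : ℝ) * hr2 + (-1/4 : ℝ) * hD4
    have hr_le_S : r ≤ S := by
      by_contra hcon
      push_neg at hcon
      nlinarith [hr2, hD4, hP0, mul_pos (by linarith : (0:ℝ) < r - S) (by linarith : (0:ℝ) < r + S)]
    have hp_nonneg : 0 ≤ p := by rw [hpval]; linarith
    have hq_gt_p : p < q := by rw [hq', hpval]; linarith
    -- S - P = u/m and m ≤ u
    have hSP : S - P = u / m := by rw [hSdef, hPdef]; field_simp; ring
    have hmu : m ≤ u := by
      have hle : ν₁ ≤ 1 := by linarith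
      calc m = u * ν₁ := hm
        _ ≤ u * 1 := by exact mul_le_mul_of_nonneg_left hle hu.le
        _ = u := mul_one u
    have hum1 : 1 ≤ u / m := (one_le_div hm0).mpr hmu
    have hg1 : (1 - p) * (1 - q) = 1 - S + P := by
      linear_combination hpq_prod - hqeq
    have hgle : 1 - S + P ≤ 0 := by
      have : 1 ≤ S - P := le_trans hum1 (le_of_eq hSP.symm)
      linarith
    have hq1 : 1 ≤ q := by
      by_contra hcon
      push_neg at hcon
      have hfac : 0 < (1 - p) * (1 - q) :=
        mul_pos (by linarith) (by linarith)
      rw [hg1] at hfac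
      linarith
    have hplt1 : p < 1 := by
      rcases eq_or_lt_of_le hν₀ with hν₀0 | hν₀pos
      · -- ν₀ = 0, so s < u, ν₁ = 1
        have hsu : s < u := by
          rcases hrec with h | h
          · exact h
          · exfalso; rw [← hν₀0] at h; exact lt_irrefl 0 h
        have hν₁1 : ν₁ = 1 := by linarith
        have hPlt1 : P < 1 := by
          rw [hPdef, hm, hν₁1]
          rw [div_lt_one (by linarith)]
          linarith
        have hle : p * 1 ≤ p * q := mul_le_mul_of_nonneg_left hq1 hp_nonneg
        rw [mul_one, hpq_prod] at hle
        linarith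
      · -- ν₀ > 0: strict inequality
        have hmu' : m < u := by
          have hlt : ν₁ < 1 := by linarith
          calc m = u * ν₁ := hm
            _ < u * 1 := by exact mul_lt_mul_of_pos_left hlt hu
            _ = u := mul_one u
        have hgl : 1 - S + P < 0 := by
          have h4 : 1 < u / m := (one_lt_div hm0).mpr hmu'
          have : 1 < S - P := lt_of_lt_of_le h4 (le_of_eq hSP.symm)
          linarith
        by_contra hcon
        push_neg at hcon
        have hfac : (0:ℝ) ≤ (p - 1) * (q - 1) :=
          mul_nonneg (by linarith) (by linarith)
        have hexp : (p - 1) * (q - 1) = 1 - S + P := by linear_combination hg1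
        linarith
    have hr_qp : q - p = r := by rw [hq', hpval]; ring
    -- sequence analysis
    have hstep : ∀ n : ℕ, a (n + 2) = S * a (n + 1) - P * a n := by
      intro n
      have h := harec (n + 1) (by omega)
      have h' : (u + s) * a (n + 1) = s * a n + m * a (n + 2) := by
        simpa [hm] using h
      rw [hSdef, hPdef]
      field_simp
      linarith
    set c0 := a 1 - p * a 0 with hc0def
    clear_value c0
    set d0 := a 1 - q * a 0 with hd0def
    clear_value d0
    have hc : ∀ n : ℕ, a (n + 1) - p * a n = q ^ n * c0 := by
      intro n
      induction n with
      | zero => simp [hc0def]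
      | succ n ih =>
        have key : a (n + 2) - p * a (n + 1) = q * (a (n + 1) - p * a n) := by
          linear_combination hstep n + (a n) * hpq_prod - (a (n + 1)) * hqeq
        rw [key, ih, pow_succ]; ring
    have hd : ∀ n : ℕ, a (n + 1) - q * a n = p ^ n * d0 := by
      intro n
      induction n with
      | zero => simp [hd0def]
      | succ n ih =>
        have key : a (n + 2) - q * a (n + 1) = p * (a (n + 1) - q * a n) := by
          linear_combination hstep n + (a n) * hpq_prod - (a (n + 1)) * hqeq
        rw [key, ih, pow_succ]; ring
    have ha : ∀ n : ℕ, r * a n = q ^ n * c0 - p ^ n * d0 := by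
      intro n
      rw [← hc n, ← hd n]
      linear_combination (-(a n)) * hr_qp
    have hptend : Tendsto (fun n : ℕ => p ^ n) atTop (nhds 0) :=
      tendsto_pow_atTop_nhds_zero_of_lt_one hp_nonneg hplt1
    have hctend : Tendsto (fun n : ℕ => c0 * q ^ n) atTop (nhds 0) := by
      have h1' : Tendsto (fun n : ℕ => r * a n + d0 * p ^ n) atTop (nhds 0) := by
        have := (hlim.const_mul r).add (hptend.const_mul d0)
        simpa using this
      have heq : (fun n : ℕ => r * a n + d0 * p ^ n) = fun n : ℕ => c0 * q ^ n := by
        funext n; rw [ha n]; ring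
      rwa [heq] at h1'
    have hc00 : c0 = 0 := by
      by_contra hne
      have habs : 0 < |c0| := abs_pos.mpr hne
      obtain ⟨N, hN⟩ := (Metric.tendsto_atTop.mp hctend) |c0| habs
      have hdist := hN N le_rfl
      rw [Real.dist_eq, sub_zero, abs_mul, abs_pow,
        abs_of_nonneg (by linarith : (0:ℝ) ≤ q)] at hdist
      have hqn : 1 ≤ q ^ N := one_le_pow₀ hq1
      have : |c0| * 1 ≤ |c0| * q ^ N := mul_le_mul_of_nonneg_left hqn (abs_nonneg c0)
      rw [mul_one] at this
      linarith
    have hd0r : d0 = -r := by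
      have h := ha 0
      rw [hc00, ha0] at h
      simp at h
      linarith
    intro n
    have h := ha n
    rw [hc00, hd0r] at h
    have h2 : r * a n = r * p ^ n := by rw [h]; ring
    exact mul_left_cancel₀ hrpos.ne' h2
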